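/- Let g : ℝ → (-∞, ∞] be proper, closed, convex with dom(g) ⊆ [0, ∞), and define f : ℝⁿ → (-∞, ∞] by f(x) = g(‖x‖₂). Then for any nonzero x ∈ ℝⁿ and λ > 0, prox_{λf}(x) = prox_{λg}(‖x‖₂) · (x / ‖x‖₂). -/

import Mathlib

/-- Beck's theorem: the prox of `f(x) = g(‖x‖)` for a proper closed convex `g` with
domain contained in `[0, ∞)` is obtained by applying the 1D prox of `g` to `‖x‖`
and rescaling the direction `x/‖x‖`. Minimizers are stated via universally
quantified inequalities. -/
theorem prox_of_norm_composition (n : ℕ) (g : ℝ → EReal)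
    (hproper₁ : ∀ t : ℝ, g t ≠ ⊥) (hproper₂ : ∃ t : ℝ, g t ≠ ⊤)
    (hclosed : LowerSemicontinuous g)
    (hconvex : ∀ u v a b : ℝ, 0 ≤ a → 0 ≤ b → a + b = 1 →
      g (a * u + b * v) ≤ (a : EReal) * g u + (b : EReal) * g v)
    (hdom : ∀ t : ℝ, t < 0 → g t = ⊤)
    (lam : ℝ) (hlam : 0 < lam)
    (x : EuclideanSpace ℝ (Fin n)) (hx : x ≠ 0)
    (y : ℝ)
    (hy : ∀ t : ℝ, g y + ((1 / (2 * lam)) * (‖x‖ - y) ^ 2 : ℝ) ≤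
      g t + ((1 / (2 * lam)) * (‖x‖ - t) ^ 2 : ℝ)) :
    ∀ v : EuclideanSpace ℝ (Fin n),
      g ‖y • ‖x‖⁻¹ • x‖ + ((1 / (2 * lam)) * ‖x - y • ‖x‖⁻¹ • x‖ ^ 2 : ℝ) ≤
      g ‖v‖ + ((1 / (2 * lam)) * ‖x - v‖ ^ 2 : ℝ) := by
  intro v
  have hxn : ‖x‖ ≠ 0 := norm_ne_zero_iff.mpr hx
  -- y must be nonnegative
  have hy0 : 0 ≤ y := by
    by_contra h
    push_neg at h
    obtain ⟨t0, ht0⟩ := hproper₂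
    have h1 := hy t0
    rw [hdom y h, EReal.top_add_coe] at h1
    exact (EReal.add_lt_top ht0 (EReal.coe_ne_top _)).ne (top_le_iff.mp h1)
  have hnorm : ‖y • ‖x‖⁻¹ • x‖ = y := by
    rw [norm_smul, norm_smul, Real.norm_eq_abs, Real.norm_eq_abs, abs_of_nonneg hy0,
      abs_of_nonneg (inv_nonneg.mpr (norm_nonneg x))]
    field_simp
  have hdist : ‖x - y • ‖x‖⁻¹ • x‖ ^ 2 = (‖x‖ - y) ^ 2 := by
    have hh : x - y • ‖x‖⁻¹ • x = (1 - y * ‖x‖⁻¹) • x := by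
      rw [sub_smul, one_smul, smul_smul]
    rw [hh, norm_smul, Real.norm_eq_abs, mul_pow, sq_abs]
    field_simp
  have hle : ((1 / (2 * lam)) * (‖x‖ - ‖v‖) ^ 2 : ℝ) ≤ ((1 / (2 * lam)) * ‖x - v‖ ^ 2 : ℝ) := by
    apply mul_le_mul_of_nonneg_left _ (by positivity)
    calc (‖x‖ - ‖v‖) ^ 2 = |‖x‖ - ‖v‖| ^ 2 := (sq_abs _).symm
      _ ≤ ‖x - v‖ ^ 2 := by
          apply pow_le_pow_left₀ (abs_nonneg _) (abs_norm_sub_norm_le x v)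
  calc g ‖y • ‖x‖⁻¹ • x‖ + ((1 / (2 * lam)) * ‖x - y • ‖x‖⁻¹ • x‖ ^ 2 : ℝ)
      = g y + ((1 / (2 * lam)) * (‖x‖ - y) ^ 2 : ℝ) := by rw [hnorm, hdist]
    _ ≤ g ‖v‖ + ((1 / (2 * lam)) * (‖x‖ - ‖v‖) ^ 2 : ℝ) := hy ‖v‖
    _ ≤ g ‖v‖ + ((1 / (2 * lam)) * ‖x - v‖ ^ 2 : ℝ) := by
        exact add_le_add (le_refl _) (EReal.coe_le_coe_iff.mpr hle)
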